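/- arXiv:2012.07249 — 2 statements merged into one kernel-verified Lean document; each statement's English description precedes it below -/
import Mathlib

section
/- For every integer n ≥ 0 and every real number x, Σ_{k=0}^{n} W_{m,r}[n,k]_q · ∏_{i=0}^{k−1} q^{−(r+im)}(x − [r+im]_q) = x^n. (With x = [t]_q this is the horizontal generating function Σ_{k=0}^{n} W_{m,r}[n,k]_q [t−r|m]_{k,q} = [t]_q^n, where [t−r|m]_{k,q} = ∏_{i=0}^{k−1}[t−r−im]_q is the q-falling factorial.) -/
open Finset

/-- The `q`-integer `[s]_q = (q^s - 1)/(q - 1)` for an integer `s`. -/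
noncomputable def qint (q : ℝ) (s : ℤ) : ℝ := (q ^ s - 1) / (q - 1)

/-- The `(q,r)`-Whitney numbers of the second kind `W_{m,r}[n,k]_q`, with `r : ℤ` so
that both `W_{m,r}` and `W_{m,-r}` are covered: `W[0,0] = 1`, `W[n,k] = 0` for `k > n`,
and `W[n,k] = q^(m(k-1)+r) W[n-1,k-1] + [mk+r]_q W[n-1,k]`. -/
noncomputable def qWhitney2 (q : ℝ) (m : ℕ) (r : ℤ) : ℕ → ℕ → ℝ
  | 0, 0 => 1
  | 0, _ + 1 => 0
  | n + 1, 0 => qint q r * qWhitney2 q m r n 0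
  | n + 1, k + 1 =>
      q ^ (m * k + r) * qWhitney2 q m r n k
        + qint q (m * (k + 1) + r) * qWhitney2 q m r n (k + 1)

lemma qWhitney2_eq_zero (q : ℝ) (m : ℕ) (r : ℤ) : ∀ n k : ℕ, n < k → qWhitney2 q m r n k = 0 := by
  intro n
  induction n with
  | zero =>
    intro k hk
    match k, hk with
    | k + 1, _ => simp [qWhitney2]
  | succ n ih =>
    intro k hk
    match k, hk with
    | k + 1, hk =>
      simp [qWhitney2, ih k (by omega), ih (k+1) (by omega)]

theorem qWhitney2_horizontal_generating_function (q : ℝ) (hq : 0 < q) (hq1 : q ≠ 1) (m r : ℕ) (hm : 0 < m) (hr : 0 < r)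
    (n : ℕ) (x : ℝ) :
    ∑ k ∈ Finset.range (n + 1),
        qWhitney2 q m (r : ℤ) n k *
          ∏ i ∈ Finset.range k, (q ^ (-((r : ℤ) + i * m)) * (x - qint q ((r : ℤ) + i * m))) =
      x ^ n := by
  have hq0 : q ≠ 0 := ne_of_gt hq
  set P : ℕ → ℝ := fun k => ∏ i ∈ Finset.range k,
      (q ^ (-((r : ℤ) + i * m)) * (x - qint q ((r : ℤ) + i * m))) with hP
  induction n with
  | zero => simp [qWhitney2, hP]
  | succ n ih =>
    set W : ℕ → ℕ → ℝ := qWhitney2 q m (r : ℤ) with hW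
    set f : ℕ → ℝ := fun k => qint q ((m : ℤ) * k + r) * W n k * P k with hf
    set g : ℕ → ℝ := fun k => q ^ ((m : ℤ) * k + (r : ℤ)) * W n k * P (k+1) with hg
    have key : ∀ k : ℕ, x * P k
        = qint q ((m : ℤ) * k + r) * P k + q ^ ((m : ℤ) * k + (r : ℤ)) * P (k+1) := by
      intro k
      have hPs : P (k+1) = P k * (q ^ (-((r : ℤ) + k * m)) * (x - qint q ((r : ℤ) + k * m))) := by
        simp [hP, Finset.prod_range_succ]
      have hz : ((m : ℤ) * k + r) + (-((r : ℤ) + k * m)) = 0 := by ring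
      have h1 : q ^ ((m : ℤ) * k + (r : ℤ)) * q ^ (-((r : ℤ) + k * m)) = 1 := by
        rw [← zpow_add₀ hq0, hz, zpow_zero]
      have h2 : ((m : ℤ) * k + r) = ((r : ℤ) + k * m) := by ring
      rw [hPs, show q ^ ((m : ℤ) * k + (r : ℤ)) *
          (P k * (q ^ (-((r : ℤ) + k * m)) * (x - qint q ((r : ℤ) + k * m))))
        = (q ^ ((m : ℤ) * k + (r : ℤ)) * q ^ (-((r : ℤ) + k * m)))
          * (P k * (x - qint q ((r : ℤ) + k * m))) from by ring, h1, h2]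
      ring
    rw [Finset.sum_range_succ']
    have hexp : ∀ k : ℕ, W (n+1) (k+1) * P (k+1) = g k + f (k+1) := by
      intro k
      simp only [hW, hf, hg, qWhitney2]
      push_cast
      ring
    have h0 : W (n+1) 0 * P 0 = f 0 := by
      simp only [hW, hf, qWhitney2]
      push_cast
      ring
    change ∑ k ∈ Finset.range (n + 1), W (n + 1) (k + 1) * P (k + 1) + W (n + 1) 0 * P 0 = x ^ (n + 1)
    change ∑ k ∈ Finset.range (n + 1), W n k * P k = x ^ n at ih
    simp only [hexp, h0]
    rw [Finset.sum_add_distrib, add_assoc, ← Finset.sum_range_succ' f (n+1),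
      Finset.sum_range_succ f (n+1)]
    have hz : f (n+1) = 0 := by
      simp [hf, hW, qWhitney2_eq_zero q m (r : ℤ) n (n+1) (by omega)]
    rw [hz, add_zero, ← Finset.sum_add_distrib]
    have hpt : ∀ k ∈ Finset.range (n+1), g k + f k = x * (W n k * P k) := by
      intro k _
      rw [show x * (W n k * P k) = (x * P k) * W n k from by ring, key k]
      simp only [hf, hg]
      ring
    rw [Finset.sum_congr rfl hpt, ← Finset.mul_sum, ih]
    ring
end

section
/- For all integers n ≥ k ≥ 0, the (q,r)-Whitney numbers of the second kind have the explicit formula W_{m,r}[n,k]_q = (1/([k]_{q^m}! · [m]_q^k)) · Σ_{j=0}^{k} (−1)^{k−j} q^{m·binom(k−j,2)} [k choose j]_{q^m} · ([jm+r]_q)^n. -/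
open Finset

/-- The `q`-factorial `[n]_q! = ∏_{i=1}^n [i]_q`. -/
noncomputable def qfact (q : ℝ) : ℕ → ℝ
  | 0 => 1
  | n + 1 => qfact q n * qint q (n + 1)

/-- The `q`-binomial coefficient `[k choose j]_q`. -/
noncomputable def qbinom (q : ℝ) (k j : ℕ) : ℝ := qfact q k / (qfact q j * qfact q (k - j))

section basic

lemma qint_nat (q : ℝ) (s : ℕ) : qint q (s : ℤ) = (q ^ s - 1) / (q - 1) := by
  simp [qint, zpow_natCast]

lemma my_pow_ne_one (q : ℝ) (hq : 0 < q) (hq1 : q ≠ 1) {s : ℕ} (hs : s ≠ 0) : q ^ s ≠ 1 := by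
  rcases lt_or_gt_of_ne hq1 with h | h
  · exact ne_of_lt (pow_lt_one₀ hq.le h hs)
  · exact ne_of_gt (one_lt_pow₀ h hs)

lemma qint_nat_ne_zero (q : ℝ) (hq : 0 < q) (hq1 : q ≠ 1) {s : ℕ} (hs : s ≠ 0) :
    qint q (s : ℤ) ≠ 0 := by
  rw [qint_nat]
  exact div_ne_zero (sub_ne_zero.2 (my_pow_ne_one q hq hq1 hs)) (sub_ne_zero.2 hq1)

lemma qfact_ne_zero (q : ℝ) (hq : 0 < q) (hq1 : q ≠ 1) (k : ℕ) : qfact q k ≠ 0 := by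
  induction k with
  | zero => simp [qfact]
  | succ n ih =>
      rw [qfact]
      exact mul_ne_zero ih (qint_nat_ne_zero q hq hq1 (by push_cast; omega))

lemma qint_zero (q : ℝ) : qint q 0 = 0 := by simp [qint]

lemma qbinom_zero_right (q : ℝ) (hq : 0 < q) (hq1 : q ≠ 1) (k : ℕ) : qbinom q k 0 = 1 := by
  rw [qbinom]
  show qfact q k / (qfact q 0 * qfact q k) = 1
  rw [qfact]
  field_simp [qfact_ne_zero q hq hq1 k]

lemma qbinom_self (q : ℝ) (hq : 0 < q) (hq1 : q ≠ 1) (k : ℕ) : qbinom q k k = 1 := by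
  rw [qbinom, Nat.sub_self]
  show _ / (_ * qfact q 0) = 1
  rw [qfact]
  field_simp [qfact_ne_zero q hq hq1 k]

-- [k+1]_q = [j+1]_q + q^{j+1} [k-j]_q  (as an identity of q-integers, j ≤ k)
lemma qint_split (q : ℝ) (hq : 0 < q) (hq1 : q ≠ 1) {j k : ℕ} (h : j ≤ k) :
    qint q ((k : ℤ) + 1) = qint q ((j : ℤ) + 1) + q ^ (j + 1) * qint q ((k - j : ℕ) : ℤ) := by
  have e1 : ((k : ℤ) + 1) = (((k + 1 : ℕ) : ℤ)) := by push_cast; ring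
  have e2 : ((j : ℤ) + 1) = (((j + 1 : ℕ) : ℤ)) := by push_cast; ring
  rw [e1, e2, qint_nat, qint_nat, qint_nat]
  have hq1' : q - 1 ≠ 0 := sub_ne_zero.2 hq1
  have : q ^ (j + 1) * q ^ (k - j) = q ^ (k + 1) := by
    rw [← pow_add]; congr 1; omega
  field_simp
  nlinarith [this]

end basic

section basic

lemma qint_add_nat (q : ℝ) (hq1 : q ≠ 1) (a b : ℕ) :
    qint q ((a + b : ℕ) : ℤ) = qint q (a : ℤ) + q ^ a * qint q (b : ℤ) := by
  rw [qint_nat, qint_nat, qint_nat, pow_add]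
  have : q - 1 ≠ 0 := sub_ne_zero.2 hq1
  field_simp
  ring

lemma qfact_succ (q : ℝ) (n : ℕ) : qfact q (n + 1) = qfact q n * qint q (((n + 1 : ℕ)) : ℤ) := by
  rw [qfact]; norm_cast

-- Pascal, in subtraction-free form
lemma qbinom_pascal (q : ℝ) (hq : 0 < q) (hq1 : q ≠ 1) (j d : ℕ) :
    qbinom q (j + d + 2) (j + 1)
      = qbinom q (j + d + 1) j + q ^ (j + 1) * qbinom q (j + d + 1) (j + 1) := by
  have e1 : j + d + 2 - (j + 1) = d + 1 := by omega
  have e2 : j + d + 1 - j = d + 1 := by omega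
  have e3 : j + d + 1 - (j + 1) = d := by omega
  rw [qbinom, qbinom, qbinom, e1, e2, e3]
  have e4 : j + d + 2 = (j + d + 1) + 1 := by omega
  rw [e4, qfact_succ q (j + d + 1), qfact_succ q (j + d), qfact_succ q j, qfact_succ q d]
  have split : qint q (((j + d + 1 + 1 : ℕ)) : ℤ)
      = qint q (((j + 1 : ℕ)) : ℤ) + q ^ (j + 1) * qint q (((d + 1 : ℕ)) : ℤ) := by
    have : (j + d + 1 + 1 : ℕ) = (j + 1) + (d + 1) := by omega
    rw [this, qint_add_nat q hq1]
  rw [split]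
  have f1 := qfact_ne_zero q hq hq1 d
  have f2 := qfact_ne_zero q hq hq1 j
  have f3 := qfact_ne_zero q hq hq1 (j + d)
  have i1 : qint q (((j + 1 : ℕ)) : ℤ) ≠ 0 := qint_nat_ne_zero q hq hq1 (by omega)
  have i2 : qint q (((d + 1 : ℕ)) : ℤ) ≠ 0 := qint_nat_ne_zero q hq hq1 (by omega)
  set A := qint q (((j + 1 : ℕ)) : ℤ) with hA
  set B := qint q (((d + 1 : ℕ)) : ℤ) with hB
  set F1 := qfact q d
  set F2 := qfact q j
  set F3 := qfact q (j + d)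
  field_simp

-- absorption, subtraction-free: (j+d+1 choose j) * [d+1] = [j+d+1] * (j+d choose j)
lemma qbinom_absorb (q : ℝ) (hq : 0 < q) (hq1 : q ≠ 1) (j d : ℕ) :
    qbinom q (j + d + 1) j * qint q (((d + 1 : ℕ)) : ℤ)
      = qint q (((j + d + 1 : ℕ)) : ℤ) * qbinom q (j + d) j := by
  have e2 : j + d + 1 - j = d + 1 := by omega
  have e3 : j + d - j = d := by omega
  rw [qbinom, qbinom, e2, e3]
  have e4 : j + d + 1 = (j + d) + 1 := by omega
  rw [e4, qfact_succ q (j + d), qfact_succ q d]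
  have f1 := qfact_ne_zero q hq hq1 d
  have f2 := qfact_ne_zero q hq hq1 j
  have f3 := qfact_ne_zero q hq hq1 (j + d)
  have i2 : qint q (((d + 1 : ℕ)) : ℤ) ≠ 0 := qint_nat_ne_zero q hq hq1 (by omega)
  set B := qint q (((d + 1 : ℕ)) : ℤ) with hB
  set F1 := qfact q d
  set F2 := qfact q j
  set F3 := qfact q (j + d)
  field_simp

end basic

noncomputable def gsum (Q : ℝ) (k : ℕ) : ℝ :=
  ∑ j ∈ Finset.range (k + 1), (-1 : ℝ) ^ (k - j) * Q ^ (Nat.choose (k - j) 2) * qbinom Q k j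

lemma choose_two_succ (t : ℕ) : Nat.choose (t + 1) 2 = Nat.choose t 2 + t := by
  rw [Nat.choose_succ_succ]
  simp [Nat.choose_one_right, Nat.add_comm]

lemma gsum_succ (Q : ℝ) (hq : 0 < Q) (hq1 : Q ≠ 1) (k : ℕ) :
    gsum Q (k + 1) = (1 - Q ^ k) * gsum Q k := by
  rw [gsum, Finset.sum_range_succ', Finset.sum_range_succ]
  have t0 : (-1 : ℝ) ^ (k + 1 - 0) * Q ^ (Nat.choose (k + 1 - 0) 2) * qbinom Q (k + 1) 0
      = (-1 : ℝ) ^ (k + 1) * Q ^ (Nat.choose (k + 1) 2) := by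
    rw [qbinom_zero_right Q hq hq1]; simp
  have tk : (-1 : ℝ) ^ (k + 1 - (k + 1)) * Q ^ (Nat.choose (k + 1 - (k + 1)) 2)
      * qbinom Q (k + 1) (k + 1) = 1 := by
    rw [qbinom_self Q hq hq1]; simp
  rw [t0, tk]
  have hmid : ∑ i ∈ Finset.range k,
      (-1 : ℝ) ^ (k + 1 - (i + 1)) * Q ^ (Nat.choose (k + 1 - (i + 1)) 2) * qbinom Q (k + 1) (i + 1)
      = ∑ i ∈ Finset.range k,
        ((-1 : ℝ) ^ (k - i) * Q ^ (Nat.choose (k - i) 2) * qbinom Q k i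
          + (-Q ^ k) * ((-1 : ℝ) ^ (k - (i + 1)) * Q ^ (Nat.choose (k - (i + 1)) 2)
              * qbinom Q k (i + 1))) := by
    refine Finset.sum_congr rfl (fun i hi => ?_)
    have hik : i < k := Finset.mem_range.1 hi
    have e1 : k + 1 - (i + 1) = k - i := by omega
    have e2 : k + 1 = i + (k - i - 1) + 2 := by omega
    have e3 : k = i + (k - i - 1) + 1 := by omega
    rw [e1]
    have pas := qbinom_pascal Q hq hq1 i (k - i - 1)
    rw [← e2, ← e3] at pas
    rw [pas]
    have e4 : k - i = (k - (i + 1)) + 1 := by omega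
    have e5 : Nat.choose (k - i) 2 = Nat.choose (k - (i + 1)) 2 + (k - (i + 1)) := by
      rw [e4, choose_two_succ]
    have e6 : (-1 : ℝ) ^ (k - i) = -(-1 : ℝ) ^ (k - (i + 1)) := by
      rw [e4, pow_succ]; ring
    have e7 : Q ^ (Nat.choose (k - i) 2) * Q ^ (i + 1)
        = Q ^ (Nat.choose (k - (i + 1)) 2) * Q ^ k := by
      rw [← pow_add, ← pow_add, e5]; congr 1; omega
    rw [e6]
    linear_combination (-(-1 : ℝ) ^ (k - (i + 1)) * qbinom Q k (i + 1)) * e7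
  rw [hmid, Finset.sum_add_distrib, ← Finset.mul_sum]
  -- first sum = gsum Q k - 1
  have h1 : ∑ i ∈ Finset.range k, (-1 : ℝ) ^ (k - i) * Q ^ (Nat.choose (k - i) 2) * qbinom Q k i
      = gsum Q k - 1 := by
    rw [gsum, Finset.sum_range_succ]
    rw [qbinom_self Q hq hq1]
    simp
  -- second inner sum = gsum Q k - (-1)^k Q^(C(k,2))
  have h2 : ∑ i ∈ Finset.range k,
      (-1 : ℝ) ^ (k - (i + 1)) * Q ^ (Nat.choose (k - (i + 1)) 2) * qbinom Q k (i + 1)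
      = gsum Q k - (-1 : ℝ) ^ k * Q ^ (Nat.choose k 2) := by
    have := Finset.sum_range_succ' (fun j => (-1 : ℝ) ^ (k - j) * Q ^ (Nat.choose (k - j) 2) * qbinom Q k j) k
    rw [gsum]
    rw [this]
    rw [qbinom_zero_right Q hq hq1]
    simp
  rw [h1, h2, choose_two_succ]
  have : (-1 : ℝ) ^ (k + 1) = -(-1 : ℝ) ^ k := by rw [pow_succ]; ring
  rw [this, pow_add]
  ring

lemma gsum_succ_eq_zero (Q : ℝ) (hq : 0 < Q) (hq1 : Q ≠ 1) (k : ℕ) : gsum Q (k + 1) = 0 := by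
  induction k with
  | zero => rw [gsum_succ Q hq hq1]; simp
  | succ n ih => rw [gsum_succ Q hq hq1, ih]; ring

noncomputable def Sfun (q : ℝ) (m r : ℕ) (n k : ℕ) : ℝ :=
  ∑ j ∈ Finset.range (k + 1),
    (-1 : ℝ) ^ (k - j) * q ^ (m * Nat.choose (k - j) 2) * qbinom (q ^ m) k j *
      qint q (((j * m + r : ℕ)) : ℤ) ^ n

lemma qint_mul_nat (q : ℝ) (hq : 0 < q) (hq1 : q ≠ 1) (m : ℕ) (hm : m ≠ 0) (d : ℕ) :
    qint q ((m * d : ℕ) : ℤ) = qint q (m : ℤ) * qint (q ^ m) (d : ℤ) := by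
  rw [qint_nat, qint_nat, qint_nat, ← pow_mul]
  have h1 : q - 1 ≠ 0 := sub_ne_zero.2 hq1
  have h2 : q ^ m - 1 ≠ 0 := by
    refine sub_ne_zero.2 ?_
    rcases lt_or_gt_of_ne hq1 with h | h
    · exact ne_of_lt (pow_lt_one₀ hq.le h hm)
    · exact ne_of_gt (one_lt_pow₀ h hm)
  field_simp

lemma choose_two_succ' (t : ℕ) : Nat.choose (t + 1) 2 = Nat.choose t 2 + t := by
  rw [Nat.choose_succ_succ]
  simp [Nat.choose_one_right, Nat.add_comm]

lemma Sfun_succ (q : ℝ) (hq : 0 < q) (hq1 : q ≠ 1) (m : ℕ) (hm : m ≠ 0) (r n k : ℕ) :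
    Sfun q m r (n + 1) (k + 1)
      = qint q (((m * (k + 1) + r : ℕ)) : ℤ) * Sfun q m r n (k + 1)
        + qint q (m : ℤ) * qint (q ^ m) (((k + 1 : ℕ)) : ℤ) * q ^ (m * k + r) * Sfun q m r n k := by
  have hQ : (0 : ℝ) < q ^ m := pow_pos hq m
  have hQ1 : q ^ m ≠ 1 := by
    rcases lt_or_gt_of_ne hq1 with h | h
    · exact ne_of_lt (pow_lt_one₀ hq.le h hm)
    · exact ne_of_gt (one_lt_pow₀ h hm)
  set A := qint q (((m * (k + 1) + r : ℕ)) : ℤ) with hA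
  -- step 1: pointwise decomposition of the summand
  have step1 : Sfun q m r (n + 1) (k + 1)
      = A * Sfun q m r n (k + 1)
        - qint q (m : ℤ) * ∑ j ∈ Finset.range (k + 2),
            ((-1 : ℝ) ^ (k + 1 - j) * q ^ (m * Nat.choose (k + 1 - j) 2) * qbinom (q ^ m) (k + 1) j
              * q ^ (j * m + r) * qint (q ^ m) (((k + 1 - j : ℕ)) : ℤ)
              * qint q (((j * m + r : ℕ)) : ℤ) ^ n) := by
    rw [Sfun, Sfun, Finset.mul_sum, Finset.mul_sum, ← Finset.sum_sub_distrib]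
    refine Finset.sum_congr rfl (fun j hj => ?_)
    have hjk : j ≤ k + 1 := by have := Finset.mem_range.1 hj; omega
    have key : qint q (((j * m + r : ℕ)) : ℤ)
        = A - q ^ (j * m + r) * qint q (m : ℤ) * qint (q ^ m) (((k + 1 - j : ℕ)) : ℤ) := by
      obtain ⟨c, hc⟩ := Nat.exists_eq_add_of_le hjk
      have e : (m * (k + 1) + r : ℕ) = (j * m + r) + m * (k + 1 - j) := by
        have hc' : k + 1 - j = c := by omega
        rw [hc', hc]; ring
      rw [hA, e, qint_add_nat q hq1 (j * m + r) (m * (k + 1 - j)),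
        qint_mul_nat q hq hq1 m hm (k + 1 - j)]
      ring
    rw [pow_succ, key]
    ring
  rw [step1]
  -- step 2: last term vanishes
  rw [Finset.sum_range_succ]
  have last : (-1 : ℝ) ^ (k + 1 - (k + 1)) * q ^ (m * Nat.choose (k + 1 - (k + 1)) 2)
      * qbinom (q ^ m) (k + 1) (k + 1) * q ^ ((k + 1) * m + r)
      * qint (q ^ m) (((k + 1 - (k + 1) : ℕ)) : ℤ)
      * qint q ((((k + 1) * m + r : ℕ)) : ℤ) ^ n = 0 := by
    simp [qint]
  rw [last, add_zero]
  -- step 3: pointwise rewrite of the remaining sum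
  have step3 : ∀ j ∈ Finset.range (k + 1),
      (-1 : ℝ) ^ (k + 1 - j) * q ^ (m * Nat.choose (k + 1 - j) 2) * qbinom (q ^ m) (k + 1) j
        * q ^ (j * m + r) * qint (q ^ m) (((k + 1 - j : ℕ)) : ℤ)
        * qint q (((j * m + r : ℕ)) : ℤ) ^ n
      = -(qint (q ^ m) (((k + 1 : ℕ)) : ℤ) * q ^ (m * k + r)) *
          ((-1 : ℝ) ^ (k - j) * q ^ (m * Nat.choose (k - j) 2) * qbinom (q ^ m) k j
            * qint q (((j * m + r : ℕ)) : ℤ) ^ n) := by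
    intro j hj
    have hjk : j ≤ k := by have := Finset.mem_range.1 hj; omega
    have e1 : k + 1 - j = (k - j) + 1 := by omega
    have absorb := qbinom_absorb (q ^ m) hQ hQ1 j (k - j)
    have e2 : j + (k - j) + 1 = k + 1 := by omega
    have e3 : j + (k - j) = k := by omega
    rw [e2, e3] at absorb
    have e4 : (-1 : ℝ) ^ (k + 1 - j) = -(-1 : ℝ) ^ (k - j) := by
      rw [e1, pow_succ]; ring
    have e5 : m * Nat.choose (k + 1 - j) 2 = m * Nat.choose (k - j) 2 + m * (k - j) := by
      rw [e1, choose_two_succ', Nat.mul_add]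
    have e6 : q ^ (m * (k - j)) * q ^ (j * m + r) = q ^ (m * k + r) := by
      rw [← pow_add]; congr 1
      have : m * (k - j) + j * m = m * k := by
        have : j * m = m * j := Nat.mul_comm j m
        rw [this, ← Nat.mul_add]
        congr 1; omega
      omega
    rw [e4, e5, pow_add, e1]
    calc -(-1:ℝ) ^ (k-j) * (q ^ (m * Nat.choose (k-j) 2) * q ^ (m * (k-j))) * qbinom (q^m) (k+1) j
          * q ^ (j * m + r) * qint (q^m) ((((k-j) + 1 : ℕ)) : ℤ) * qint q (((j * m + r : ℕ)) : ℤ) ^ n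
        = -(-1:ℝ) ^ (k-j) * (q ^ (m * Nat.choose (k-j) 2) * (q ^ (m * (k-j)) * q ^ (j * m + r)))
          * (qbinom (q^m) (k+1) j * qint (q^m) ((((k-j) + 1 : ℕ)) : ℤ))
          * qint q (((j * m + r : ℕ)) : ℤ) ^ n := by ring
      _ = -(-1:ℝ) ^ (k-j) * (q ^ (m * Nat.choose (k-j) 2) * q ^ (m * k + r))
          * (qint (q^m) (((k + 1 : ℕ)) : ℤ) * qbinom (q^m) k j)
          * qint q (((j * m + r : ℕ)) : ℤ) ^ n := by rw [e6, absorb]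
      _ = _ := by ring
  rw [Finset.sum_congr rfl step3, ← Finset.mul_sum, ← Sfun]
  ring




lemma qbinom_zero_zero (q : ℝ) : qbinom q 0 0 = 1 := by
  simp [qbinom, qfact]

lemma main_aux (q : ℝ) (hq : 0 < q) (hq1 : q ≠ 1) (m : ℕ) (hm : m ≠ 0) (r : ℕ) :
    ∀ n k, qfact (q ^ m) k * (qint q (m : ℤ)) ^ k * qWhitney2 q m (r : ℤ) n k
      = Sfun q m r n k := by
  have hQ : (0 : ℝ) < q ^ m := pow_pos hq m
  have hQ1 : q ^ m ≠ 1 := by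
    rcases lt_or_gt_of_ne hq1 with h | h
    · exact ne_of_lt (pow_lt_one₀ hq.le h hm)
    · exact ne_of_gt (one_lt_pow₀ h hm)
  intro n
  induction n with
  | zero =>
      intro k
      match k with
      | 0 =>
          show qfact (q ^ m) 0 * (qint q (m : ℤ)) ^ 0 * 1 = Sfun q m r 0 0
          rw [Sfun]
          simp [qbinom_zero_zero, qfact]
      | k + 1 =>
          show qfact (q ^ m) (k+1) * (qint q (m : ℤ)) ^ (k+1) * 0 = Sfun q m r 0 (k + 1)
          rw [mul_zero]
          have : Sfun q m r 0 (k + 1) = gsum (q ^ m) (k + 1) := by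
            rw [Sfun, gsum]
            refine Finset.sum_congr rfl (fun j hj => ?_)
            rw [pow_zero, mul_one, pow_mul]
          rw [this, gsum_succ_eq_zero (q ^ m) hQ hQ1]
  | succ n ih =>
      intro k
      match k with
      | 0 =>
          show qfact (q ^ m) 0 * (qint q (m : ℤ)) ^ 0 * (qint q (r : ℤ) * qWhitney2 q m (r:ℤ) n 0)
            = Sfun q m r (n+1) 0
          have h0 := ih 0
          have ch : Nat.choose 0 2 = 0 := rfl
          simp only [Sfun, Finset.sum_range_one, Nat.sub_zero, Nat.zero_mul, Nat.zero_add,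
            ch, Nat.mul_zero, pow_zero, one_mul, mul_one, qbinom_zero_zero, qfact] at h0 ⊢
          rw [h0, pow_succ]
          ring
      | k + 1 =>
          show qfact (q ^ m) (k+1) * (qint q (m : ℤ)) ^ (k+1) *
              (q ^ ((m : ℤ) * (k : ℤ) + (r : ℤ)) * qWhitney2 q m (r:ℤ) n k
                + qint q ((m : ℤ) * ((k : ℤ) + 1) + (r : ℤ)) * qWhitney2 q m (r:ℤ) n (k+1))
            = Sfun q m r (n+1) (k+1)
          have c1 : ((m : ℤ) * (k : ℤ) + (r : ℤ)) = ((m * k + r : ℕ) : ℤ) := by push_cast; ring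
          have c2 : ((m : ℤ) * ((k : ℤ) + 1) + (r : ℤ)) = ((m * (k + 1) + r : ℕ) : ℤ) := by
            push_cast; ring
          rw [c1, c2, zpow_natCast]
          rw [Sfun_succ q hq hq1 m hm r n k, ← ih k, ← ih (k + 1)]
          rw [qfact_succ (q ^ m) k, pow_succ]
          ring

theorem qWhitney2_explicit_formula (q : ℝ) (hq : 0 < q) (hq1 : q ≠ 1) (m r : ℕ) (hm : 0 < m) (hr : 0 < r)
    (n k : ℕ) (hkn : k ≤ n) :
    qWhitney2 q m (r : ℤ) n k =
      1 / (qfact (q ^ m) k * (qint q m) ^ k) *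
        ∑ j ∈ Finset.range (k + 1),
          (-1 : ℝ) ^ (k - j) * q ^ (m * Nat.choose (k - j) 2) * qbinom (q ^ m) k j *
            qint q (j * m + r) ^ n := by
  have hQ : (0 : ℝ) < q ^ m := pow_pos hq m
  have hQ1 : q ^ m ≠ 1 := by
    rcases lt_or_gt_of_ne hq1 with h | h
    · exact ne_of_lt (pow_lt_one₀ hq.le h hm.ne')
    · exact ne_of_gt (one_lt_pow₀ h hm.ne')
  have hsum : ∑ j ∈ Finset.range (k + 1),
      (-1 : ℝ) ^ (k - j) * q ^ (m * Nat.choose (k - j) 2) * qbinom (q ^ m) k j *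
        qint q (j * m + r) ^ n = Sfun q m r n k := by
    rw [Sfun]
    refine Finset.sum_congr rfl (fun j hj => ?_)
    have : ((j : ℤ) * (m : ℤ) + (r : ℤ)) = ((j * m + r : ℕ) : ℤ) := by push_cast; ring
    rw [this]
  rw [hsum, ← main_aux q hq hq1 m hm.ne' r n k]
  have hD : qfact (q ^ m) k * (qint q (m : ℤ)) ^ k ≠ 0 :=
    mul_ne_zero (qfact_ne_zero (q ^ m) hQ hQ1 k)
      (pow_ne_zero k (qint_nat_ne_zero q hq hq1 hm.ne'))
  field_simp
  rw [mul_assoc, mul_div_assoc, div_self hD, mul_one]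
end
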